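/- Let H_A, H_B be finite-dimensional Hilbert spaces decomposed as direct sums H_A = ⊕_{i=0}^{N} H_A^i and H_B = ⊕_{j=0}^{N} H_B^j, with P_i^A, P_j^B the orthogonal projectors onto the summands. Let ψ ∈ H_A ⊗ H_B be a unit vector supported on ⊕_{n=0}^{N} ⊕_{i+j=n} H_A^i ⊗ H_B^j, and let P_n = ∑_{i+j=n} P_i^A ⊗ P_j^B. Then ∑_{n=0}^{N} ⟨ψ|P_n|ψ⟩ · E(P_n ψ / ‖P_n ψ‖) ≤ E(ψ) + log₂(N+1), where E(χ) denotes the entropy of entanglement, i.e., the von Neumann entropy of the reduced state tr_B |χ⟩⟨χ| (and terms with P_n ψ = 0 are omitted). -/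

import Mathlib

open Matrix

/-- Von Neumann entropy (base 2) of a Hermitian matrix, via its eigenvalues. -/
noncomputable def vnEntropy {ι : Type*} [Fintype ι] [DecidableEq ι]
    (ρ : Matrix ι ι ℂ) : ℝ :=
  if h : ρ.IsHermitian then -∑ i, h.eigenvalues i * Real.logb 2 (h.eigenvalues i)
  else 0

/-- Reduced density matrix `tr_B |χ⟩⟨χ|` of a (not necessarily normalized)
bipartite vector `χ`. -/
noncomputable def redA {A B : Type*} [Fintype A] [Fintype B]
    (χ : A × B → ℂ) : Matrix A A ℂ :=
  Matrix.of fun a a' => ∑ b, χ (a, b) * star (χ (a', b))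

/-- Entropy of entanglement of a bipartite vector. -/
noncomputable def entE {A B : Type*} [Fintype A] [Fintype B] [DecidableEq A]
    (χ : A × B → ℂ) : ℝ :=
  vnEntropy (redA χ)

/-- Squared norm of a vector. -/
noncomputable def nrmSq {ι : Type*} [Fintype ι] (χ : ι → ℂ) : ℝ :=
  ∑ p, Complex.normSq (χ p)

/-- Projection of `ψ` onto the subspace of total particle number `n`. -/
noncomputable def projN {A B : Type*} (nA : A → ℕ) (nB : B → ℕ) (n : ℕ)
    (ψ : A × B → ℂ) : A × B → ℂ :=
  fun p => if nA p.1 + nB p.2 = n then ψ p else 0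

open Polynomial ComplexOrder

noncomputable def hh (x : ℝ) : ℝ := -(x * Real.logb 2 x)

lemma hh_zero : hh 0 = 0 := by simp [hh]

lemma hh_concave : ConcaveOn ℝ (Set.Ici 0) hh := by
  have h : hh = (Real.log 2)⁻¹ • Real.negMulLog := by
    funext x
    simp only [hh, Real.negMulLog, Real.logb, Pi.smul_apply, smul_eq_mul]
    ring
  rw [h]
  exact Real.concaveOn_negMulLog.smul (by positivity)

lemma vnEntropy_herm {ι : Type*} [Fintype ι] [DecidableEq ι] {ρ : Matrix ι ι ℂ}
    (h : ρ.IsHermitian) : vnEntropy ρ = ∑ i, hh (h.eigenvalues i) := by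
  rw [vnEntropy, dif_pos h]
  simp [hh]

lemma det_smul_one_sub {ι : Type*} [Fintype ι] [DecidableEq ι] {τ : Matrix ι ι ℂ}
    (h : τ.IsHermitian) (z : ℂ) :
    (z • 1 - τ).det = ∏ i, (z - (h.eigenvalues i : ℂ)) := by
  set U : Matrix ι ι ℂ := (h.eigenvectorUnitary : Matrix ι ι ℂ) with hUdef
  have hU1 : U * star U = 1 := (Matrix.mem_unitaryGroup_iff).mp h.eigenvectorUnitary.2
  have hU2 : star U * U = 1 := (Matrix.mem_unitaryGroup_iff').mp h.eigenvectorUnitary.2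
  have key : z • 1 - τ = U * (z • 1 - diagonal (Complex.ofReal ∘ h.eigenvalues)) * star U := by
    rw [Matrix.mul_sub, Matrix.sub_mul]
    congr 1
    · rw [Matrix.mul_smul, Matrix.mul_one, Matrix.smul_mul, hU1]
    · exact h.spectral_theorem
  rw [key, det_mul, det_mul]
  have : det U * det (star U) = 1 := by rw [← det_mul, hU1, det_one]
  rw [mul_comm (det U), mul_assoc, this, mul_one]
  have : z • (1 : Matrix ι ι ℂ) - diagonal (Complex.ofReal ∘ h.eigenvalues)
      = diagonal (fun i => z - (h.eigenvalues i : ℂ)) := by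
    rw [smul_one_eq_diagonal, diagonal_sub]
    rfl
  rw [this, det_diagonal]

lemma roots_X_pow_mul_prod {η : Type*} [Fintype η] (m : ℕ) (g : η → ℝ) :
    (X ^ m * ∏ i : η, (X - C ((g i : ℝ) : ℂ))).roots
      = m • ({0} : Multiset ℂ) + (Finset.univ.val.map fun i => ((g i : ℝ) : ℂ)) := by
  have hzero : (∏ i : η, (X - C ((g i : ℝ) : ℂ))) ≠ 0 :=
    (monic_prod_of_monic _ _ fun i _ => monic_X_sub_C _).ne_zero
  rw [roots_mul (mul_ne_zero (pow_ne_zero _ X_ne_zero) hzero), roots_pow, roots_X]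
  congr 1
  have : (∏ i : η, (X - C ((g i : ℝ) : ℂ)))
      = ((Finset.univ.val.map fun i => ((g i : ℝ) : ℂ)).map fun a => X - C a).prod := by
    rw [Multiset.map_map]
    rfl
  rw [this, roots_multiset_prod_X_sub_C]

lemma sum_f_eig {ι κ : Type*} [Fintype ι] [DecidableEq ι] [Fintype κ]
    {τ : Matrix ι ι ℂ} (h : τ.IsHermitian) (d : κ → ℝ) (f : ℝ → ℝ) (hf : f 0 = 0)
    (hdet : ∀ z : ℂ, z ≠ 0 →
      z ^ (Fintype.card κ) * (z • 1 - τ).det = z ^ (Fintype.card ι) * ∏ k, (z - (d k : ℂ))) :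
    ∑ i, f (h.eigenvalues i) = ∑ k, f (d k) := by
  classical
  set p : ℂ[X] := X ^ (Fintype.card κ) * ∏ i, (X - C ((h.eigenvalues i : ℝ) : ℂ)) with hp
  set q : ℂ[X] := X ^ (Fintype.card ι) * ∏ k, (X - C ((d k : ℝ) : ℂ)) with hq
  have hpmonic : p.Monic := (monic_X_pow _).mul (monic_prod_of_monic _ _ fun i _ => monic_X_sub_C _)
  have hqmonic : q.Monic := (monic_X_pow _).mul (monic_prod_of_monic _ _ fun i _ => monic_X_sub_C _)
  have heval : ∀ z : ℂ, z ≠ 0 → p.eval z = q.eval z := by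
    intro z hz
    have h1 := hdet z hz
    rw [det_smul_one_sub h] at h1
    simpa [hp, hq, eval_prod] using h1
  have hpq : p = q := by
    have : p - q = 0 := by
      apply Polynomial.eq_zero_of_infinite_isRoot
      apply Set.Infinite.mono (s := {(0:ℂ)}ᶜ)
      · intro z hz
        simp only [Set.mem_setOf_eq, IsRoot, eval_sub, sub_eq_zero]
        exact heval z hz
      · exact Set.Finite.infinite_compl (Set.finite_singleton 0)
    exact sub_eq_zero.mp this
  have hre : (p.roots.map fun z : ℂ => f z.re).sum = (q.roots.map fun z : ℂ => f z.re).sum := by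
    rw [hpq]
  rw [hp, hq, roots_X_pow_mul_prod, roots_X_pow_mul_prod] at hre
  simp only [Multiset.map_add, Multiset.sum_add, Multiset.map_nsmul, Multiset.map_singleton,
    Multiset.sum_nsmul, Multiset.sum_singleton, Complex.zero_re, hf, smul_zero,
    Multiset.map_map, zero_add] at hre
  convert hre using 2 <;> simp [Function.comp]

lemma vnEntropy_eq_of_det {ι κ : Type*} [Fintype ι] [DecidableEq ι] [Fintype κ]
    {τ : Matrix ι ι ℂ} (h : τ.IsHermitian) (d : κ → ℝ)
    (hdet : ∀ z : ℂ, z ≠ 0 →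
      z ^ (Fintype.card κ) * (z • 1 - τ).det = z ^ (Fintype.card ι) * ∏ k, (z - (d k : ℂ))) :
    vnEntropy τ = ∑ k, hh (d k) := by
  rw [vnEntropy_herm h]
  exact sum_f_eig h d hh hh_zero hdet

lemma trace_herm {ι : Type*} [Fintype ι] [DecidableEq ι] {τ : Matrix ι ι ℂ}
    (h : τ.IsHermitian) : τ.trace = ((∑ i, h.eigenvalues i : ℝ) : ℂ) := by
  conv_lhs => rw [h.spectral_theorem, Unitary.conjStarAlgAut_apply]
  rw [Matrix.trace_mul_cycle,
    (Matrix.mem_unitaryGroup_iff').mp h.eigenvectorUnitary.2, Matrix.one_mul, trace_diagonal]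
  push_cast
  rfl

lemma diag_re_nonneg {ι : Type*} [Fintype ι] [DecidableEq ι] {τ : Matrix ι ι ℂ}
    (hτ : τ.PosSemidef) (j : ι) : 0 ≤ (τ j j).re := by
  have h := hτ.dotProduct_mulVec_nonneg (Pi.single j 1)
  have hd : dotProduct (star (Pi.single j 1)) (τ *ᵥ Pi.single j 1) = τ j j := by
    simp [dotProduct, Matrix.mulVec, Pi.single_apply, apply_ite (star : ℂ → ℂ),
      Finset.mul_sum, mul_ite, Finset.sum_ite_eq]
  rw [hd] at h
  exact (Complex.le_def.mp h).1

lemma trace_re_nonneg {ι : Type*} [Fintype ι] [DecidableEq ι] {τ : Matrix ι ι ℂ}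
    (hτ : τ.PosSemidef) : 0 ≤ (τ.trace).re := by
  rw [trace_herm hτ.1]
  simpa using Finset.sum_nonneg fun i _ => hτ.eigenvalues_nonneg i

lemma vnEntropy_zero_of_trace {ι : Type*} [Fintype ι] [DecidableEq ι] {τ : Matrix ι ι ℂ}
    (hτ : τ.PosSemidef) (ht : (τ.trace).re = 0) : vnEntropy τ = 0 := by
  rw [vnEntropy_herm hτ.1]
  have hsum : ∑ i, hτ.1.eigenvalues i = 0 := by
    have := trace_herm hτ.1
    rw [this] at ht
    simpa using ht
  have : ∀ i ∈ Finset.univ, hτ.1.eigenvalues i = 0 :=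
    (Finset.sum_eq_zero_iff_of_nonneg fun i _ => hτ.eigenvalues_nonneg i).mp hsum
  exact Finset.sum_eq_zero fun i _ => by rw [this i (Finset.mem_univ i), hh_zero]

lemma vnEntropy_le_sum_diag {ι : Type*} [Fintype ι] [DecidableEq ι] {τ : Matrix ι ι ℂ}
    (hτ : τ.PosSemidef) : vnEntropy τ ≤ ∑ j, hh ((τ j j).re) := by
  classical
  set h := hτ.1 with hh'
  set U : Matrix ι ι ℂ := (h.eigenvectorUnitary : Matrix ι ι ℂ) with hU
  set lam := h.eigenvalues with hlam
  have hU1 : U * star U = 1 := (Matrix.mem_unitaryGroup_iff).mp h.eigenvectorUnitary.2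
  have hU2 : star U * U = 1 := (Matrix.mem_unitaryGroup_iff').mp h.eigenvectorUnitary.2
  have hdiag : ∀ j, (τ j j).re = ∑ k, Complex.normSq (U j k) * lam k := by
    intro j
    conv_lhs => rw [h.spectral_theorem, Unitary.conjStarAlgAut_apply]
    have e1 : (U * diagonal ((RCLike.ofReal : ℝ → ℂ) ∘ lam) * star U) j j
        = ∑ k, ((Complex.normSq (U j k) * lam k : ℝ) : ℂ) := by
      rw [Matrix.mul_apply]
      refine Finset.sum_congr rfl fun k _ => ?_
      rw [Matrix.mul_diagonal, Matrix.star_apply, Complex.star_def]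
      have : U j k * (((RCLike.ofReal : ℝ → ℂ) ∘ lam) k) * (starRingEnd ℂ) (U j k)
          = ((lam k : ℂ)) * (U j k * (starRingEnd ℂ) (U j k)) := by
        show U j k * ((lam k : ℂ)) * _ = _
        ring
      rw [this, Complex.mul_conj]
      push_cast
      ring
    rw [e1, Complex.re_sum]
    exact Finset.sum_congr rfl fun k _ => Complex.ofReal_re _
  have hrow : ∀ j, ∑ k, Complex.normSq (U j k) = 1 := by
    intro j
    have h2 : (U * star U) j j = 1 := by rw [hU1, Matrix.one_apply_eq]
    rw [Matrix.mul_apply] at h2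
    have h3 : ((∑ k, Complex.normSq (U j k) : ℝ) : ℂ) = 1 := by
      push_cast
      rw [← h2]
      exact Finset.sum_congr rfl fun k _ => by
        rw [Matrix.star_apply, Complex.star_def, Complex.mul_conj]
    exact_mod_cast h3
  have hcol : ∀ k, ∑ j, Complex.normSq (U j k) = 1 := by
    intro k
    have h2 : (star U * U) k k = 1 := by rw [hU2, Matrix.one_apply_eq]
    rw [Matrix.mul_apply] at h2
    have h3 : ((∑ j, Complex.normSq (U j k) : ℝ) : ℂ) = 1 := by
      push_cast
      rw [← h2]
      refine Finset.sum_congr rfl fun j _ => ?_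
      rw [Matrix.star_apply, Complex.star_def, mul_comm, Complex.mul_conj]
    exact_mod_cast h3
  have hjensen : ∀ j, ∑ k, Complex.normSq (U j k) * hh (lam k) ≤ hh ((τ j j).re) := by
    intro j
    rw [hdiag j]
    have := hh_concave.le_map_sum (t := Finset.univ) (w := fun k => Complex.normSq (U j k))
      (p := lam) (fun k _ => Complex.normSq_nonneg _) (hrow j)
      (fun k _ => hτ.eigenvalues_nonneg k)
    simpa [smul_eq_mul] using this
  rw [vnEntropy_herm h]
  calc ∑ k, hh (lam k) = ∑ k, (∑ j, Complex.normSq (U j k)) * hh (lam k) := by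
        refine Finset.sum_congr rfl fun k _ => ?_
        rw [hcol k, one_mul]
    _ = ∑ j, ∑ k, Complex.normSq (U j k) * hh (lam k) := by
        rw [Finset.sum_comm]
        exact Finset.sum_congr rfl fun k _ => Finset.sum_mul ..
    _ ≤ ∑ j, hh ((τ j j).re) := Finset.sum_le_sum fun j _ => hjensen j

lemma psd_add {ι : Type*} [Fintype ι] {A B : Matrix ι ι ℂ} (hA : A.PosSemidef)
    (hB : B.PosSemidef) : (A + B).PosSemidef :=
  hA.add hB

lemma psd_sum {ι κ : Type*} [Fintype ι] [Fintype κ] (R : κ → Matrix ι ι ℂ)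
    (hR : ∀ k, (R k).PosSemidef) : (∑ k, R k).PosSemidef :=
  Finset.sum_induction R Matrix.PosSemidef (fun _ _ ha hb => psd_add ha hb)
    Matrix.PosSemidef.zero (fun k _ => hR k)

lemma hh_scale {t y : ℝ} (ht : 0 < t) (hy : 0 ≤ y) :
    t * hh (y / t) = hh y + y * Real.logb 2 t := by
  rcases eq_or_lt_of_le hy with h0 | h0
  · simp [← h0, hh_zero, hh]
  · have hl : Real.logb 2 (y / t) = Real.logb 2 y - Real.logb 2 t :=
      Real.logb_div (ne_of_gt h0) (ne_of_gt ht)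
    have htne : t ≠ 0 := ne_of_gt ht
    simp only [hh, hl]
    field_simp
    ring

lemma vnEntropy_conj {ι : Type*} [Fintype ι] [DecidableEq ι] {τ : Matrix ι ι ℂ}
    (hτ : τ.IsHermitian) (U : Matrix ι ι ℂ) (hU : U ∈ Matrix.unitaryGroup ι ℂ) :
    vnEntropy (Uᴴ * τ * U) = vnEntropy τ := by
  have hU1 : U * Uᴴ = 1 := by
    rw [← Matrix.star_eq_conjTranspose]; exact (Matrix.mem_unitaryGroup_iff).mp hU
  have hU2 : Uᴴ * U = 1 := by
    rw [← Matrix.star_eq_conjTranspose]; exact (Matrix.mem_unitaryGroup_iff').mp hU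
  have hherm : (Uᴴ * τ * U).IsHermitian := by
    show (Uᴴ * τ * U)ᴴ = _
    rw [Matrix.conjTranspose_mul, Matrix.conjTranspose_mul,
      Matrix.conjTranspose_conjTranspose, hτ.eq, Matrix.mul_assoc]
  rw [vnEntropy_herm hτ]
  apply vnEntropy_eq_of_det hherm hτ.eigenvalues
  intro z hz
  congr 1
  have key : z • (1 : Matrix ι ι ℂ) - Uᴴ * τ * U = Uᴴ * (z • 1 - τ) * U := by
    rw [Matrix.mul_sub, Matrix.sub_mul]
    congr 1
    rw [Matrix.mul_smul, Matrix.mul_one, Matrix.smul_mul, hU2]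
  rw [key, det_mul, det_mul, det_smul_one_sub hτ, mul_comm (det Uᴴ), mul_assoc]
  have hdet1 : det Uᴴ * det U = 1 := by rw [← det_mul, hU2, det_one]
  rw [hdet1, mul_one]

lemma ml {ι κ : Type*} [Fintype ι] [DecidableEq ι] [Fintype κ] [DecidableEq κ]
    (R : κ → Matrix ι ι ℂ) (hR : ∀ k, (R k).PosSemidef)
    (hsum : ∑ k, ((R k).trace).re = 1) :
    ∑ k, (vnEntropy (R k) + ((R k).trace).re * Real.logb 2 (((R k).trace).re))
      ≤ vnEntropy (∑ k, R k) := by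
  classical
  set t : κ → ℝ := fun k => ((R k).trace).re with htdef
  set σ : Matrix ι ι ℂ := ∑ k, R k with hσdef
  have hσ : σ.PosSemidef := psd_sum R hR
  set U : Matrix ι ι ℂ := (hσ.1.eigenvectorUnitary : Matrix ι ι ℂ) with hUdef
  have hUmem : U ∈ Matrix.unitaryGroup ι ℂ := hσ.1.eigenvectorUnitary.2
  have hU1 : U * Uᴴ = 1 := by
    rw [← Matrix.star_eq_conjTranspose]; exact (Matrix.mem_unitaryGroup_iff).mp hUmem
  set R' : κ → Matrix ι ι ℂ := fun k => Uᴴ * R k * U with hR'def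
  have hR' : ∀ k, (R' k).PosSemidef := fun k => (hR k).conjTranspose_mul_mul_same U
  set y : κ → ι → ℝ := fun k j => ((R' k) j j).re with hydef
  have hy0 : ∀ k j, 0 ≤ y k j := fun k j => diag_re_nonneg (hR' k) j
  have ht0 : ∀ k, 0 ≤ t k := fun k => trace_re_nonneg (hR k)
  have htr : ∀ k, (R' k).trace = (R k).trace := by
    intro k
    rw [hR'def, Matrix.trace_mul_cycle, hU1, Matrix.one_mul]
  have hyt : ∀ k, ∑ j, y k j = t k := by
    intro k
    show ∑ j, y k j = ((R k).trace).re
    rw [← htr k]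
    have h1 : (R' k).trace = ∑ j, (R' k) j j := rfl
    rw [h1, Complex.re_sum]
  have heig : ∀ j, ∑ k, y k j = hσ.1.eigenvalues j := by
    intro j
    have h2 : Uᴴ * σ * U = diagonal ((RCLike.ofReal : ℝ → ℂ) ∘ hσ.1.eigenvalues) := by
      have := hσ.1.conjStarAlgAut_star_eigenvectorUnitary
      rwa [Unitary.conjStarAlgAut_star_apply, Matrix.star_eq_conjTranspose] at this
    have hconj : ∑ k, R' k = diagonal ((RCLike.ofReal : ℝ → ℂ) ∘ hσ.1.eigenvalues) := by
      rw [← h2, hσdef, Finset.mul_sum, Finset.sum_mul]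
    have hentry : (∑ k, R' k) j j = ((hσ.1.eigenvalues j : ℝ) : ℂ) := by
      rw [hconj, Matrix.diagonal_apply_eq]
      rfl
    have h3 : ∑ k, ((R' k) j j) = ((hσ.1.eigenvalues j : ℝ) : ℂ) := by
      rw [← hentry, Matrix.sum_apply]
    calc ∑ k, y k j = (∑ k, (R' k) j j).re := by rw [Complex.re_sum]
      _ = hσ.1.eigenvalues j := by rw [h3, Complex.ofReal_re]
  set s : Finset κ := Finset.univ.filter (fun k => t k ≠ 0) with hsdef
  have hts : ∑ k ∈ s, t k = 1 := by rw [hsdef, Finset.sum_filter_ne_zero]; exact hsum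
  have hyzero : ∀ k, t k = 0 → ∀ j, y k j = 0 := by
    intro k hk j
    have h0 : ∑ j, y k j = 0 := by rw [hyt k, hk]
    exact (Finset.sum_eq_zero_iff_of_nonneg fun j _ => hy0 k j).mp h0 j (Finset.mem_univ j)
  have step1 : ∀ j, ∑ k ∈ s, t k * hh (y k j / t k) ≤ hh (hσ.1.eigenvalues j) := by
    intro j
    have hJ := hh_concave.le_map_sum (t := s) (w := t) (p := fun k => y k j / t k)
      (fun k _ => ht0 k) hts
      (fun k _ => div_nonneg (hy0 k j) (ht0 k))
    have e1 : ∀ k ∈ s, t k • (y k j / t k) = y k j := by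
      intro k hk
      have hne : t k ≠ 0 := (Finset.mem_filter.mp hk).2
      rw [smul_eq_mul]
      field_simp
    have hpt : ∑ k ∈ s, t k • (y k j / t k) = hσ.1.eigenvalues j := by
      rw [Finset.sum_congr rfl e1, ← heig j]
      exact Finset.sum_subset (Finset.filter_subset _ _)
        (fun k _ hk => hyzero k (by simpa [hsdef] using hk) j)
    rw [hpt] at hJ
    simpa [smul_eq_mul] using hJ
  have step2 : ∀ k ∈ s, vnEntropy (R k) + t k * Real.logb 2 (t k)
      ≤ ∑ j, t k * hh (y k j / t k) := by
    intro k hk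
    have hne : t k ≠ 0 := (Finset.mem_filter.mp hk).2
    have htpos : 0 < t k := lt_of_le_of_ne (ht0 k) (Ne.symm hne)
    have hid : ∀ j, t k * hh (y k j / t k) = hh (y k j) + y k j * Real.logb 2 (t k) :=
      fun j => hh_scale htpos (hy0 k j)
    calc vnEntropy (R k) + t k * Real.logb 2 (t k)
        = vnEntropy (R' k) + t k * Real.logb 2 (t k) := by
          rw [hR'def]
          rw [vnEntropy_conj (hR k).1 U hUmem]
      _ ≤ (∑ j, hh (y k j)) + t k * Real.logb 2 (t k) := by
          have := vnEntropy_le_sum_diag (hR' k)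
          exact add_le_add_left this _
      _ = ∑ j, t k * hh (y k j / t k) := by
          rw [Finset.sum_congr rfl fun j _ => hid j, Finset.sum_add_distrib,
            ← Finset.sum_mul, hyt k]
  have hoff : ∀ k, k ∉ s → vnEntropy (R k) + t k * Real.logb 2 (t k) = 0 := by
    intro k hk
    have h0 : t k = 0 := by simpa [hsdef] using hk
    rw [h0, vnEntropy_zero_of_trace (hR k) h0, zero_mul, add_zero]
  calc ∑ k, (vnEntropy (R k) + t k * Real.logb 2 (t k))
      = ∑ k ∈ s, (vnEntropy (R k) + t k * Real.logb 2 (t k)) :=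
        (Finset.sum_subset (Finset.filter_subset _ _) fun k _ hk => hoff k hk).symm
    _ ≤ ∑ k ∈ s, ∑ j, t k * hh (y k j / t k) := Finset.sum_le_sum step2
    _ = ∑ j, ∑ k ∈ s, t k * hh (y k j / t k) := Finset.sum_comm
    _ ≤ ∑ j, hh (hσ.1.eigenvalues j) := Finset.sum_le_sum fun j _ => step1 j
    _ = vnEntropy σ := (vnEntropy_herm hσ.1).symm

lemma vnEntropy_mul_conjTranspose {ιA ιB : Type*} [Fintype ιA] [DecidableEq ιA]
    [Fintype ιB] [DecidableEq ιB] (M : Matrix ιA ιB ℂ) :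
    vnEntropy (M * Mᴴ) = vnEntropy (Mᴴ * M) := by
  have h1 : (M * Mᴴ).PosSemidef := Matrix.posSemidef_self_mul_conjTranspose M
  have h2 : (Mᴴ * M).PosSemidef := Matrix.posSemidef_conjTranspose_mul_self M
  rw [vnEntropy_herm h2.1]
  apply vnEntropy_eq_of_det h1.1 h2.1.eigenvalues
  intro z hz
  rw [← det_smul_one_sub h2.1]
  have hzc : (z : ℂ) ≠ 0 := hz
  letI : Invertible (1 : Matrix ιB ιB ℂ) := invertibleOne
  letI : Invertible (z • (1 : Matrix ιA ιA ℂ)) :=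
    ⟨z⁻¹ • 1, by rw [Matrix.smul_mul, Matrix.one_mul, smul_smul, inv_mul_cancel₀ hz, one_smul],
      by rw [Matrix.smul_mul, Matrix.one_mul, smul_smul, mul_inv_cancel₀ hz, one_smul]⟩
  have hinv : ⅟(z • (1 : Matrix ιA ιA ℂ)) = z⁻¹ • 1 := by
    apply invOf_eq_right_inv
    rw [Matrix.smul_mul, Matrix.one_mul, smul_smul, mul_inv_cancel₀ hz, one_smul]
  have d1 : (Matrix.fromBlocks (z • 1) M Mᴴ (1 : Matrix ιB ιB ℂ)).det
      = (z • 1 - M * Mᴴ).det := by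
    rw [Matrix.det_fromBlocks₂₂, det_one, one_mul, invOf_one, Matrix.mul_one]
  have d2 : (Matrix.fromBlocks (z • 1) M Mᴴ (1 : Matrix ιB ιB ℂ)).det
      = z ^ (Fintype.card ιA) * (1 - z⁻¹ • (Mᴴ * M)).det := by
    rw [Matrix.det_fromBlocks₁₁, hinv]
    congr 1
    · rw [Matrix.det_smul, det_one, mul_one, Fintype.card]
    · congr 1
      rw [Matrix.mul_smul, Matrix.mul_one, Matrix.smul_mul]
  have key : (z • 1 - Mᴴ * M).det = z ^ (Fintype.card ιB) * (1 - z⁻¹ • (Mᴴ * M)).det := by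
    have : z • (1 : Matrix ιB ιB ℂ) - Mᴴ * M = z • (1 - z⁻¹ • (Mᴴ * M)) := by
      rw [smul_sub, smul_smul, mul_inv_cancel₀ hz, one_smul]
    rw [this, Matrix.det_smul, Fintype.card]
  rw [← d1, d2, key]
  ring

lemma vnEntropy_transpose {ι : Type*} [Fintype ι] [DecidableEq ι] {τ : Matrix ι ι ℂ}
    (hτ : τ.IsHermitian) : vnEntropy τᵀ = vnEntropy τ := by
  rw [vnEntropy_herm hτ]
  apply vnEntropy_eq_of_det hτ.transpose hτ.eigenvalues
  intro z hz
  congr 1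
  have hts : z • (1 : Matrix ι ι ℂ) - τᵀ = (z • 1 - τ)ᵀ := by
    rw [Matrix.transpose_sub, Matrix.transpose_smul, Matrix.transpose_one]
  rw [hts, Matrix.det_transpose, det_smul_one_sub hτ]

lemma vnEntropy_blockDiagonal {ι F : Type*} [Fintype ι] [DecidableEq ι] [Fintype F]
    [DecidableEq F] (Bl : F → Matrix ι ι ℂ) (hBl : ∀ i, (Bl i).IsHermitian) :
    vnEntropy (Matrix.blockDiagonal Bl) = ∑ i, vnEntropy (Bl i) := by
  have hherm : (Matrix.blockDiagonal Bl).IsHermitian := by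
    show _ᴴ = _
    rw [Matrix.blockDiagonal_conjTranspose]
    exact congrArg _ (funext fun i => (hBl i).eq)
  have key := vnEntropy_eq_of_det (κ := ι × F) hherm
    (fun p => (hBl p.2).eigenvalues p.1) ?_
  · rw [key, Fintype.sum_prod_type, Finset.sum_comm]
    exact Finset.sum_congr rfl fun i _ => (vnEntropy_herm (hBl i)).symm
  intro z hz
  congr 1
  have hbd : z • (1 : Matrix (ι × F) (ι × F) ℂ) - Matrix.blockDiagonal Bl
      = Matrix.blockDiagonal (fun i => z • 1 - Bl i) := by
    ext p q
    rcases p with ⟨b, i⟩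
    rcases q with ⟨b', i'⟩
    by_cases h : i = i'
    · subst h
      simp [Matrix.blockDiagonal_apply, Matrix.one_apply, Prod.ext_iff]
    · simp [Matrix.blockDiagonal_apply, Matrix.one_apply, Prod.ext_iff, h]
  rw [hbd, Matrix.det_blockDiagonal]
  rw [Fintype.prod_prod_type, Finset.prod_comm]
  exact Finset.prod_congr rfl fun i _ => det_smul_one_sub (hBl i) z

lemma vnEntropy_smul {ι : Type*} [Fintype ι] [DecidableEq ι] {τ : Matrix ι ι ℂ}
    (hτ : τ.PosSemidef) {c : ℝ} (hc : 0 < c) :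
    vnEntropy (((c : ℝ) : ℂ) • τ) = ∑ i, hh (c * hτ.1.eigenvalues i) := by
  have hcne : ((c : ℝ) : ℂ) ≠ 0 := by
    simpa using ne_of_gt hc
  have hherm : (((c : ℝ) : ℂ) • τ).IsHermitian := by
    show _ᴴ = _
    rw [Matrix.conjTranspose_smul, hτ.1.eq, Complex.star_def, Complex.conj_ofReal]
  apply vnEntropy_eq_of_det (κ := ι) hherm (fun i => c * hτ.1.eigenvalues i)
  intro z hz
  congr 1
  have key : z • (1 : Matrix ι ι ℂ) - ((c : ℝ) : ℂ) • τ
      = ((c : ℝ) : ℂ) • (((((c : ℝ) : ℂ))⁻¹ * z) • 1 - τ) := by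
    rw [smul_sub, smul_smul, ← mul_assoc, mul_inv_cancel₀ hcne, one_mul]
  rw [key, Matrix.det_smul, det_smul_one_sub hτ.1, Fintype.card, ← Finset.prod_const,
    ← Finset.prod_mul_distrib]
  refine Finset.prod_congr rfl fun i _ => ?_
  rw [mul_sub, ← mul_assoc, mul_inv_cancel₀ hcne, one_mul]
  push_cast
  ring

lemma sum_hh_le {K : ℕ} (hK : 0 < K) (q : Fin K → ℝ) (hq : ∀ i, 0 ≤ q i)
    (hsum : ∑ i, q i = 1) : ∑ i, hh (q i) ≤ Real.logb 2 K := by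
  have hKne : (K : ℝ) ≠ 0 := Nat.cast_ne_zero.mpr hK.ne'
  have hJ := hh_concave.le_map_sum (t := (Finset.univ : Finset (Fin K)))
    (w := fun _ => (K : ℝ)⁻¹) (p := q) (fun i _ => by positivity)
    (by rw [Finset.sum_const, Finset.card_univ, Fintype.card_fin, nsmul_eq_mul,
      mul_inv_cancel₀ hKne]) (fun i _ => hq i)
  have h1 : ∑ i, (K : ℝ)⁻¹ • q i = (K : ℝ)⁻¹ := by
    simp only [smul_eq_mul, ← Finset.mul_sum, hsum, mul_one]
  rw [h1] at hJ
  have h2 : hh ((K : ℝ)⁻¹) = (K : ℝ)⁻¹ * Real.logb 2 K := by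
    rw [hh, Real.logb_inv]
    ring
  rw [h2] at hJ
  have h3 : (K : ℝ)⁻¹ * ∑ i, hh (q i) ≤ (K : ℝ)⁻¹ * Real.logb 2 K := by
    calc (K : ℝ)⁻¹ * ∑ i, hh (q i) = ∑ i, (K : ℝ)⁻¹ • hh (q i) := by
          rw [Finset.mul_sum]; rfl
      _ ≤ (K : ℝ)⁻¹ * Real.logb 2 K := hJ
  have hKpos : (0 : ℝ) < (K : ℝ)⁻¹ := by positivity
  exact le_of_mul_le_mul_left h3 hKpos

lemma redA_eq_mul {A B : Type*} [Fintype A] [Fintype B] (χ : A × B → ℂ) :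
    redA χ = (Matrix.of fun a b => χ (a, b)) * (Matrix.of fun a b => χ (a, b))ᴴ := by
  ext a a'
  simp [redA, Matrix.mul_apply, Matrix.conjTranspose_apply]

lemma redA_posSemidef {A B : Type*} [Fintype A] [Fintype B] (χ : A × B → ℂ) :
    (redA χ).PosSemidef := by
  rw [redA_eq_mul]
  exact Matrix.posSemidef_self_mul_conjTranspose _

lemma nrmSq_nonneg {ι : Type*} [Fintype ι] (χ : ι → ℂ) : 0 ≤ nrmSq χ :=
  Finset.sum_nonneg fun p _ => Complex.normSq_nonneg _

lemma trace_redA {A B : Type*} [Fintype A] [Fintype B] (χ : A × B → ℂ) :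
    (redA χ).trace = ((nrmSq χ : ℝ) : ℂ) := by
  have h1 : (redA χ).trace = ∑ a, ∑ b, χ (a, b) * star (χ (a, b)) := rfl
  rw [h1, nrmSq]
  rw [Fintype.sum_prod_type]
  push_cast
  exact Finset.sum_congr rfl fun a _ => Finset.sum_congr rfl fun b _ => by
    rw [Complex.star_def, Complex.mul_conj]

lemma vnEntropy_redA_swap {A B : Type*} [Fintype A] [Fintype B] [DecidableEq A]
    [DecidableEq B] (χ : A × B → ℂ) :
    vnEntropy (redA fun p : B × A => χ (p.2, p.1)) = vnEntropy (redA χ) := by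
  set M : Matrix A B ℂ := Matrix.of fun a b => χ (a, b) with hM
  have h1 : redA χ = M * Mᴴ := redA_eq_mul χ
  have h2 : (redA fun p : B × A => χ (p.2, p.1)) = Mᵀ * (Mᵀ)ᴴ := by
    ext b b'
    simp [redA, Matrix.mul_apply, Matrix.conjTranspose_apply, hM]
  have h3 : (Mᵀ)ᴴ * Mᵀ = (M * Mᴴ)ᵀ := by
    ext a a'
    simp only [Matrix.mul_apply, Matrix.conjTranspose_apply, Matrix.transpose_apply]
    exact Finset.sum_congr rfl fun b _ => by ring
  rw [h1, h2, vnEntropy_mul_conjTranspose, h3,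
    vnEntropy_transpose (Matrix.posSemidef_self_mul_conjTranspose M).1]

/-- Measuring the total particle number of a bipartite pure state with at most
`N` particles increases the average entanglement by at most `log₂(N+1)`:
`∑ₙ ⟨ψ|Pₙ|ψ⟩ E(Pₙψ/‖Pₙψ‖) ≤ E(ψ) + log₂(N+1)`. -/
theorem avg_entanglement_after_number_measurement
    {A B : Type*} [Fintype A] [Fintype B] [DecidableEq A]
    (nA : A → ℕ) (nB : B → ℕ) (N : ℕ)
    (ψ : A × B → ℂ) (hψ : nrmSq ψ = 1)
    (hsupp : ∀ p : A × B, N < nA p.1 + nB p.2 → ψ p = 0) :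
    ∑ n ∈ Finset.range (N + 1),
        nrmSq (projN nA nB n ψ) *
          entE ((((Real.sqrt (nrmSq (projN nA nB n ψ)))⁻¹ : ℝ) : ℂ) •
            projN nA nB n ψ)
      ≤ entE ψ + Real.logb 2 (N + 1) := by
  classical
  -- the measured components and their reduced matrices
  have hRpsd : ∀ n : Fin (N+1), (redA (projN nA nB n.val ψ)).PosSemidef :=
    fun n => redA_posSemidef _
  have htr : ∀ n : Fin (N+1),
      ((redA (projN nA nB n.val ψ)).trace).re = nrmSq (projN nA nB n.val ψ) := fun n => by
    rw [trace_redA]; exact Complex.ofReal_re _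
  have hp0 : ∀ n : ℕ, 0 ≤ nrmSq (projN nA nB n ψ) := fun n => nrmSq_nonneg _
  -- total probability is 1
  have hpsum : ∑ n : Fin (N+1), nrmSq (projN nA nB n.val ψ) = 1 := by
    rw [← hψ]
    unfold nrmSq projN
    rw [Finset.sum_comm]
    refine Finset.sum_congr rfl fun p _ => ?_
    have e1 : ∀ n : Fin (N+1),
        Complex.normSq (if nA p.1 + nB p.2 = n.val then ψ p else 0)
          = if nA p.1 + nB p.2 = n.val then Complex.normSq (ψ p) else 0 := fun n => by
      split <;> simp
    rw [Finset.sum_congr rfl fun n _ => e1 n,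
      Fin.sum_univ_eq_sum_range (fun n => if nA p.1 + nB p.2 = n then Complex.normSq (ψ p) else 0),
      Finset.sum_ite_eq]
    by_cases hmem : nA p.1 + nB p.2 ∈ Finset.range (N+1)
    · rw [if_pos hmem]
    · rw [if_neg hmem, hsupp p (by simpa [Finset.mem_range, Nat.lt_succ_iff, not_le] using hmem)]
      simp
  -- per-term identity for the LHS
  have hterm : ∀ n : Fin (N+1),
      nrmSq (projN nA nB n.val ψ) *
          entE ((((Real.sqrt (nrmSq (projN nA nB n.val ψ)))⁻¹ : ℝ) : ℂ) • projN nA nB n.val ψ)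
        = vnEntropy (redA (projN nA nB n.val ψ))
            + nrmSq (projN nA nB n.val ψ) * Real.logb 2 (nrmSq (projN nA nB n.val ψ)) := by
    intro n
    by_cases hp : nrmSq (projN nA nB n.val ψ) = 0
    · have h0 : vnEntropy (redA (projN nA nB n.val ψ)) = 0 :=
        vnEntropy_zero_of_trace (hRpsd n) (by rw [htr n, hp])
      rw [hp, h0]
      simp
    · have hppos : 0 < nrmSq (projN nA nB n.val ψ) := lt_of_le_of_ne (hp0 n.val) (Ne.symm hp)
      have hc : ((Real.sqrt (nrmSq (projN nA nB n.val ψ)))⁻¹ : ℝ)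
            * ((Real.sqrt (nrmSq (projN nA nB n.val ψ)))⁻¹ : ℝ)
          = (nrmSq (projN nA nB n.val ψ))⁻¹ := by
        rw [← mul_inv, Real.mul_self_sqrt (hp0 n.val)]
      have hred : redA ((((Real.sqrt (nrmSq (projN nA nB n.val ψ)))⁻¹ : ℝ) : ℂ)
            • projN nA nB n.val ψ)
          = ((((nrmSq (projN nA nB n.val ψ))⁻¹ : ℝ)) : ℂ) • redA (projN nA nB n.val ψ) := by
        ext a a'
        simp only [redA, Matrix.of_apply, Pi.smul_apply, smul_eq_mul, star_mul',
          Complex.star_def, Complex.conj_ofReal, Matrix.smul_apply]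
        rw [Finset.mul_sum]
        refine Finset.sum_congr rfl fun b _ => ?_
        rw [show ∀ x y c : ℂ, c * x * (c * y) = (c * c) * (x * y) from fun x y c => by ring]
        congr 1
        rw [← Complex.ofReal_mul, hc]
      rw [entE, hred, vnEntropy_smul (hRpsd n) (inv_pos.mpr hppos), Finset.mul_sum]
      have hsumlam : ∑ i, (hRpsd n).1.eigenvalues i = nrmSq (projN nA nB n.val ψ) := by
        have h1 := trace_herm (hRpsd n).1
        rw [trace_redA] at h1
        exact_mod_cast h1.symm
      calc ∑ i, nrmSq (projN nA nB n.val ψ)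
            * hh ((nrmSq (projN nA nB n.val ψ))⁻¹ * (hRpsd n).1.eigenvalues i)
          = ∑ i, (hh ((hRpsd n).1.eigenvalues i)
              + (hRpsd n).1.eigenvalues i * Real.logb 2 (nrmSq (projN nA nB n.val ψ))) := by
            refine Finset.sum_congr rfl fun i _ => ?_
            rw [inv_mul_eq_div]
            exact hh_scale hppos ((hRpsd n).eigenvalues_nonneg i)
        _ = vnEntropy (redA (projN nA nB n.val ψ))
              + nrmSq (projN nA nB n.val ψ) * Real.logb 2 (nrmSq (projN nA nB n.val ψ)) := by
            rw [Finset.sum_add_distrib, ← Finset.sum_mul, hsumlam, vnEntropy_herm (hRpsd n).1]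
  -- apply the concavity lemma on the A side
  have hml1 := ml (fun n : Fin (N+1) => redA (projN nA nB n.val ψ)) hRpsd
    (by simp only [htr]; exact hpsum)
  -- the flagged state
  set φ : A × (B × Fin (N+1)) → ℂ :=
    fun q => if nA q.1 = (q.2.2 : ℕ) then ψ (q.1, q.2.1) else 0 with hφ
  set χB : Fin (N+1) → (B × A → ℂ) :=
    fun i q => if nA q.2 = (i : ℕ) then ψ (q.2, q.1) else 0 with hχB
  have step_a : ∑ n : Fin (N+1), redA (projN nA nB n.val ψ) = redA φ := by
    ext a a'
    rw [Matrix.sum_apply]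
    simp only [redA, Matrix.of_apply, hφ, projN]
    rw [Finset.sum_comm, Fintype.sum_prod_type]
    refine Finset.sum_congr rfl fun b _ => ?_
    by_cases hv : ψ (a, b) = 0
    · simp [hv]
    · have hle : nA a + nB b ≤ N := by
        by_contra h
        exact hv (hsupp (a, b) (show N < nA a + nB b by omega))
      simp only [apply_ite (star : ℂ → ℂ), star_zero, ite_mul, mul_ite, zero_mul, mul_zero]
      rw [Fin.sum_univ_eq_sum_range (fun n => if nA a' + nB b = n then
            (if nA a + nB b = n then ψ (a, b) * star (ψ (a', b)) else 0) else 0),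
        Fin.sum_univ_eq_sum_range (fun i => if nA a' = i then
            (if nA a = i then ψ (a, b) * star (ψ (a', b)) else 0) else 0),
        Finset.sum_ite_eq, Finset.sum_ite_eq]
      simp only [Finset.mem_range]
      split_ifs <;> first | rfl | (exfalso; omega)
  have step_b : (redA fun p : (B × Fin (N+1)) × A => φ (p.2, p.1))
      = Matrix.blockDiagonal (fun i => redA (χB i)) := by
    ext ⟨b, i⟩ ⟨b', i'⟩
    simp only [redA, Matrix.of_apply, Matrix.blockDiagonal_apply]
    by_cases h : i = i'
    · subst h
      rw [if_pos rfl]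
    · rw [if_neg h]
      refine Finset.sum_eq_zero fun a _ => ?_
      by_cases h1 : nA a = (i : ℕ)
      · have h2 : ¬ (nA a = (i' : ℕ)) := fun hc => h (Fin.ext (by omega))
        simp only [hφ]
        rw [if_neg h2, star_zero, mul_zero]
      · simp only [hφ]
        rw [if_neg h1, zero_mul]
  have step_c : ∑ i : Fin (N+1), redA (χB i) = redA (fun p : B × A => ψ (p.2, p.1)) := by
    ext b b'
    rw [Matrix.sum_apply]
    simp only [redA, Matrix.of_apply, hχB]
    rw [Finset.sum_comm]
    refine Finset.sum_congr rfl fun a _ => ?_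
    simp only [apply_ite (star : ℂ → ℂ), star_zero, ite_mul, mul_ite, zero_mul, mul_zero]
    have hmerge : ∀ (P : Prop) [Decidable P] (v : ℂ),
        (if P then (if P then v else 0) else 0) = if P then v else 0 := by
      intros P _ v
      split <;> simp
    have e4 : ∀ i : Fin (N + 1),
        (if nA a = (i : ℕ) then (if nA a = (i : ℕ) then ψ (a, b) * star (ψ (a, b')) else 0) else 0)
          = if nA a = (i : ℕ) then ψ (a, b) * star (ψ (a, b')) else 0 := fun i => hmerge _ _
    rw [Finset.sum_congr rfl fun i _ => e4 i,
      Fin.sum_univ_eq_sum_range (fun i => if nA a = i then ψ (a, b) * star (ψ (a, b')) else 0),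
      Finset.sum_ite_eq]
    by_cases hmem : nA a ∈ Finset.range (N+1)
    · rw [if_pos hmem]
    · rw [if_neg hmem]
      have hz : ψ (a, b) = 0 := hsupp (a, b) (show N < nA a + nB b by
        have : ¬ nA a < N + 1 := by simpa [Finset.mem_range] using hmem
        omega)
      rw [hz]
      simp
  -- probabilities on the B side
  have hq1 : ∑ i : Fin (N+1), nrmSq (χB i) = 1 := by
    rw [← hψ]
    unfold nrmSq
    rw [Finset.sum_comm]
    have hswap : ∑ p : B × A, Complex.normSq (ψ (p.2, p.1)) = ∑ p : A × B, Complex.normSq (ψ p) :=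
      Fintype.sum_equiv (Equiv.prodComm B A) _ _ (fun p => rfl)
    rw [← hswap]
    refine Finset.sum_congr rfl fun p _ => ?_
    have e1 : ∀ i : Fin (N+1),
        Complex.normSq (χB i p) = if nA p.2 = (i : ℕ) then Complex.normSq (ψ (p.2, p.1)) else 0 :=
      fun i => by simp only [hχB]; split <;> simp
    rw [Finset.sum_congr rfl fun i _ => e1 i,
      Fin.sum_univ_eq_sum_range (fun i => if nA p.2 = i then Complex.normSq (ψ (p.2, p.1)) else 0),
      Finset.sum_ite_eq]
    by_cases hmem : nA p.2 ∈ Finset.range (N+1)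
    · rw [if_pos hmem]
    · rw [if_neg hmem]
      have hz : ψ (p.2, p.1) = 0 := hsupp (p.2, p.1) (show N < nA p.2 + nB p.1 by
        have : ¬ nA p.2 < N + 1 := by simpa [Finset.mem_range] using hmem
        omega)
      rw [hz]
      simp
  have hqtr : ∀ i : Fin (N+1), ((redA (χB i)).trace).re = nrmSq (χB i) := fun i => by
    rw [trace_redA]; exact Complex.ofReal_re _
  have hml2 := ml (fun i : Fin (N+1) => redA (χB i)) (fun i => redA_posSemidef _)
    (by simp only [hqtr]; exact hq1)
  have hmaxent : ∑ i : Fin (N+1), hh (nrmSq (χB i)) ≤ Real.logb 2 (N+1 : ℕ) :=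
    sum_hh_le (Nat.succ_pos N) (fun i => nrmSq (χB i)) (fun i => nrmSq_nonneg _) hq1
  -- assemble
  have hBside : ∑ i : Fin (N+1), vnEntropy (redA (χB i)) ≤ entE ψ + Real.logb 2 (N+1 : ℕ) := by
    have e2 : ∑ i : Fin (N+1), vnEntropy (redA (χB i))
        = (∑ i : Fin (N+1), (vnEntropy (redA (χB i))
            + ((redA (χB i)).trace).re * Real.logb 2 (((redA (χB i)).trace).re)))
          + ∑ i : Fin (N+1), hh (nrmSq (χB i)) := by
      rw [← Finset.sum_add_distrib]
      refine Finset.sum_congr rfl fun i _ => ?_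
      rw [hqtr i, hh]
      ring
    rw [e2]
    have e3 : vnEntropy (∑ i : Fin (N+1), redA (χB i)) = entE ψ := by
      rw [step_c, entE, ← vnEntropy_redA_swap ψ]
    calc _ ≤ vnEntropy (∑ i : Fin (N+1), redA (χB i)) + ∑ i : Fin (N+1), hh (nrmSq (χB i)) :=
          add_le_add_left hml2 _
      _ ≤ entE ψ + Real.logb 2 (N+1 : ℕ) := by rw [e3]; exact add_le_add_right hmaxent _
  have hAeq : vnEntropy (∑ n : Fin (N+1), redA (projN nA nB n.val ψ))
      = ∑ i : Fin (N+1), vnEntropy (redA (χB i)) := by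
    rw [step_a, ← vnEntropy_redA_swap φ, step_b,
      vnEntropy_blockDiagonal _ (fun i => (redA_posSemidef (χB i)).1)]
  calc ∑ n ∈ Finset.range (N + 1),
        nrmSq (projN nA nB n ψ) *
          entE ((((Real.sqrt (nrmSq (projN nA nB n ψ)))⁻¹ : ℝ) : ℂ) • projN nA nB n ψ)
      = ∑ n : Fin (N+1), nrmSq (projN nA nB n.val ψ) *
          entE ((((Real.sqrt (nrmSq (projN nA nB n.val ψ)))⁻¹ : ℝ) : ℂ) • projN nA nB n.val ψ) :=
        (Fin.sum_univ_eq_sum_range (fun n => nrmSq (projN nA nB n ψ) *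
          entE ((((Real.sqrt (nrmSq (projN nA nB n ψ)))⁻¹ : ℝ) : ℂ) • projN nA nB n ψ)) _).symm
    _ = ∑ n : Fin (N+1), (vnEntropy (redA (projN nA nB n.val ψ))
          + nrmSq (projN nA nB n.val ψ) * Real.logb 2 (nrmSq (projN nA nB n.val ψ))) :=
        Finset.sum_congr rfl fun n _ => hterm n
    _ ≤ vnEntropy (∑ n : Fin (N+1), redA (projN nA nB n.val ψ)) := by
        refine le_trans (le_of_eq ?_) hml1
        refine Finset.sum_congr rfl fun n _ => ?_
        rw [htr n]
    _ = ∑ i : Fin (N+1), vnEntropy (redA (χB i)) := hAeq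
    _ ≤ entE ψ + Real.logb 2 (N+1 : ℕ) := hBside
    _ = entE ψ + Real.logb 2 (N + 1) := by push_cast; ring
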